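/- Let h : ℝ^d → ℝ be differentiable with M_h-Lipschitz gradient, and σ : ℝ^d → ℝ proper lower semicontinuous with inf σ > -∞. Fix t > M_h and u ∈ dom σ. If u⁺ minimizes w ↦ σ(w) + ⟨∇h(u), w - u⟩ + (t/2)‖w - u‖², then h(u⁺) + σ(u⁺) ≤ h(u) + σ(u) - ((t - M_h)/2)‖u⁺ - u‖². -/

import Mathlib

open RealInnerProductSpace

lemma descent_lemma {d : ℕ} (h : EuclideanSpace ℝ (Fin d) → ℝ)
    (h' : EuclideanSpace ℝ (Fin d) → EuclideanSpace ℝ (Fin d)) (M : ℝ)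
    (hdiff : ∀ x, HasGradientAt h (h' x) x)
    (hlip : ∀ x y, ‖h' x - h' y‖ ≤ M * ‖x - y‖)
    (u v : EuclideanSpace ℝ (Fin d)) :
    h (u + v) ≤ h u + ⟪h' u, v⟫ + M / 2 * ‖v‖ ^ 2 := by
  set g : ℝ → ℝ := fun s => h (u + s • v) - s * ⟪h' u, v⟫ - M * s ^ 2 * ‖v‖ ^ 2 / 2 with hg
  have hline : ∀ s : ℝ, HasDerivAt (fun s : ℝ => u + s • v) v s := by
    intro s
    exact ((hasDerivAt_const s u).add ((hasDerivAt_id s).smul_const v)).congr_deriv (by simp)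
  have hphi : ∀ s : ℝ, HasDerivAt (fun s => h (u + s • v)) ⟪h' (u + s • v), v⟫ s := by
    intro s
    have := ((hdiff (u + s • v)).hasFDerivAt).comp_hasDerivAt s (hline s)
    simp only [InnerProductSpace.toDual_apply_apply] at this
    exact this
  have hgd : ∀ s : ℝ, HasDerivAt g
      (⟪h' (u + s • v), v⟫ - ⟪h' u, v⟫ - M * s * ‖v‖ ^ 2) s := by
    intro s
    have h1 : HasDerivAt (fun s : ℝ => s * ⟪h' u, v⟫) ⟪h' u, v⟫ s := by
      simpa using (hasDerivAt_id s).mul_const (⟪h' u, v⟫)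
    have h2 : HasDerivAt (fun s : ℝ => M * s ^ 2 * ‖v‖ ^ 2 / 2) (M * s * ‖v‖ ^ 2) s := by
      have : HasDerivAt (fun s : ℝ => s ^ 2) (2 * s) s := by
        simpa using hasDerivAt_pow 2 s
      have := ((this.const_mul M).mul_const (‖v‖ ^ 2)).div_const 2
      refine this.congr_deriv ?_
      ring
    exact ((hphi s).sub h1).sub h2
  have hmono : g 1 ≤ g 0 := by
    have hconv : Convex ℝ (Set.Icc (0:ℝ) 1) := convex_Icc 0 1
    have hanti : AntitoneOn g (Set.Icc (0:ℝ) 1) := by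
      apply antitoneOn_of_deriv_nonpos hconv
      · exact Continuous.continuousOn
          (continuous_iff_continuousAt.2 fun s => (hgd s).continuousAt)
      · intro s _
        exact (hgd s).differentiableAt.differentiableWithinAt
      · intro s hs
        rw [interior_Icc] at hs
        rw [(hgd s).deriv]
        have key : ⟪h' (u + s • v) - h' u, v⟫ ≤ M * s * ‖v‖ ^ 2 := by
          calc ⟪h' (u + s • v) - h' u, v⟫ ≤ ‖h' (u + s • v) - h' u‖ * ‖v‖ :=
                real_inner_le_norm _ _
            _ ≤ M * ‖(u + s • v) - u‖ * ‖v‖ := by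
                have := hlip (u + s • v) u
                have hv : (0:ℝ) ≤ ‖v‖ := norm_nonneg _
                nlinarith [norm_nonneg (h' (u + s • v) - h' u)]
            _ = M * s * ‖v‖ ^ 2 := by
                rw [add_sub_cancel_left, norm_smul]
                simp [Real.norm_eq_abs, abs_of_pos hs.1]
                ring
        rw [inner_sub_left] at key
        linarith
    exact hanti (by norm_num) (by norm_num) (by norm_num)
  simp only [hg, one_smul, zero_smul, add_zero, one_pow, one_mul, zero_mul,
    mul_zero, zero_pow, sub_zero] at hmono
  have : M * 1 ^ 2 * ‖v‖ ^ 2 / 2 = M / 2 * ‖v‖ ^ 2 := by ring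
  linarith [hmono]

/-- Sufficient decrease property of a proximal gradient step. -/
theorem sufficient_decrease {d : ℕ} (h σ : EuclideanSpace ℝ (Fin d) → ℝ)
    (h' : EuclideanSpace ℝ (Fin d) → EuclideanSpace ℝ (Fin d)) (M t : ℝ)
    (hdiff : ∀ x, HasGradientAt h (h' x) x)
    (hlip : ∀ x y, ‖h' x - h' y‖ ≤ M * ‖x - y‖)
    (hσ : LowerSemicontinuous σ) (hσbdd : BddBelow (Set.range σ))
    (ht : M < t) (u uplus : EuclideanSpace ℝ (Fin d))
    (hmin : ∀ w, σ uplus + ⟪h' u, uplus - u⟫ + t / 2 * ‖uplus - u‖ ^ 2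
      ≤ σ w + ⟪h' u, w - u⟫ + t / 2 * ‖w - u‖ ^ 2) :
    h uplus + σ uplus ≤ h u + σ u - (t - M) / 2 * ‖uplus - u‖ ^ 2 := by
  have hdesc := descent_lemma h h' M hdiff hlip u (uplus - u)
  rw [add_sub_cancel] at hdesc
  have hm := hmin u
  simp only [sub_self, inner_zero_right, norm_zero] at hm
  have hz : (0:ℝ) ^ 2 = 0 := by norm_num
  rw [hz, mul_zero, add_zero, add_zero] at hm
  have : (t - M) / 2 * ‖uplus - u‖ ^ 2 = t / 2 * ‖uplus - u‖ ^ 2 - M / 2 * ‖uplus - u‖ ^ 2 := by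
    ring
  linarith
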